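/- Let k be a commutative ring, H a k-bialgebra, A a k-algebra, and ρ : A → A⊗H a k-linear map. Then the following are equivalent: (i) ρ satisfies the right lax H-comodule algebra conditions (2.1.1) ρ(ab) = ρ(a)ρ(b), (2.2.1) ρ²(a) = a_{[0]}1_{[0]} ⊗ a_{[1](1)}1_{[1]} ⊗ a_{[1](2)}, (2.2.2) ε(a_{[1]})a_{[0]} = ε(1_{[1]})1_{[0]}a, (2.5.1) ρ(1_A) = ε(1_{[1]})1_{[0]} ⊗ 1_{[2]}, together with (2.6.1) ε(1_{[1]})1_{[0]} = 1_A; (ii) ρ satisfies (2.1.1), (2.2.1), and (2.2.3) ε(a_{[1]})a_{[0]} = a for all a ∈ A. (Either set of conditions defines A as a right partial H-comodule algebra.) -/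

import Mathlib

open TensorProduct

/-- The map `A ⊗ H → (A ⊗ H) ⊗ H`, `a ⊗ h ↦ (a ⊗ h⁽¹⁾) ⊗ h⁽²⁾`, i.e. `id_A ⊗ δ`
followed by the inverse associator. -/
noncomputable def coassocMap (k A H : Type*) [CommRing k] [Ring A] [Algebra k A]
    [Ring H] [Bialgebra k H] :
    A ⊗[k] H →ₗ[k] (A ⊗[k] H) ⊗[k] H :=
  (TensorProduct.assoc k A H H).symm.toLinearMap ∘ₗ
    LinearMap.lTensor A (Coalgebra.comul (R := k) (A := H))

/-- The map `ε' : A ⊗ H → A`, `a ⊗ h ↦ ε(h) a`. -/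
noncomputable def counitMap (k A H : Type*) [CommRing k] [Ring A] [Algebra k A]
    [Ring H] [Bialgebra k H] :
    A ⊗[k] H →ₗ[k] A :=
  (TensorProduct.rid k A).toLinearMap ∘ₗ
    LinearMap.lTensor A (Coalgebra.counit (R := k) (A := H))


section
variable (k A H : Type*) [CommRing k] [Ring A] [Algebra k A] [Ring H] [Bialgebra k H]

noncomputable def counitAlg : A ⊗[k] H →ₐ[k] A :=
  (Algebra.TensorProduct.rid k k A).toAlgHom.comp
    (Algebra.TensorProduct.map (AlgHom.id k A) (Bialgebra.counitAlgHom k H))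

noncomputable def counitAlg2 : (A ⊗[k] H) ⊗[k] H →ₐ[k] A ⊗[k] H :=
  Algebra.TensorProduct.map (counitAlg k A H) (AlgHom.id k H)

lemma counitAlg_eq : (counitAlg k A H).toLinearMap = counitMap k A H := by
  apply TensorProduct.ext'
  intro a h
  simp [counitAlg, counitMap, Bialgebra.counitAlgHom]

lemma counitAlg2_eq : (counitAlg2 k A H).toLinearMap = (counitMap k A H).rTensor H := by
  apply TensorProduct.ext'
  intro x h
  simp [counitAlg2, ← counitAlg_eq]

lemma key : (counitMap k A H).rTensor H ∘ₗ coassocMap k A H = LinearMap.id := by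
  apply TensorProduct.ext'
  intro a h
  have h1 : ∀ z : H ⊗[k] H,
      (counitMap k A H).rTensor H ((TensorProduct.assoc k A H H).symm (a ⊗ₜ[k] z)) =
        a ⊗ₜ[k] (TensorProduct.lid k H) ((Coalgebra.counit (R := k)).rTensor H z) := by
    intro z
    induction z using TensorProduct.induction_on with
    | zero =>
        rw [tmul_zero, LinearEquiv.map_zero]
        simp
    | tmul x y => simp [counitMap, TensorProduct.smul_tmul]
    | add x y hx hy =>
        rw [tmul_add, LinearEquiv.map_add, map_add, hx, hy, map_add]
        simp [tmul_add]
  simp only [LinearMap.comp_apply, LinearMap.id_apply, coassocMap,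
    LinearEquiv.coe_coe, LinearMap.lTensor_tmul, LinearMap.id_coe, id_eq]
  rw [h1, Coalgebra.rTensor_counit_comul]
  simp
end


/-- `ρ` satisfies the right lax `H`-comodule algebra conditions
(2.1.1), (2.2.1), (2.2.2), (2.5.1) together with (2.6.1) `ε(1₍₁₎)1₍₀₎ = 1` if and only
if `ρ` satisfies (2.1.1), (2.2.1) and (2.2.3); either set of conditions defines a right
partial `H`-comodule algebra. -/
theorem partial_comodule_algebra_iff (k A H : Type*) [CommRing k] [Ring A] [Algebra k A]
    [Ring H] [Bialgebra k H] (ρ : A →ₗ[k] A ⊗[k] H) :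
    ((∀ a b : A, ρ (a * b) = ρ a * ρ b) ∧
     (∀ a : A, ρ.rTensor H (ρ a) = coassocMap k A H (ρ a) * (ρ 1 ⊗ₜ[k] (1 : H))) ∧
     (∀ a : A, counitMap k A H (ρ a) = counitMap k A H (ρ 1) * a) ∧
     (ρ 1 = (counitMap k A H).rTensor H (ρ.rTensor H (ρ 1))) ∧
     (counitMap k A H (ρ 1) = 1)) ↔
    ((∀ a b : A, ρ (a * b) = ρ a * ρ b) ∧
     (∀ a : A, ρ.rTensor H (ρ a) = coassocMap k A H (ρ a) * (ρ 1 ⊗ₜ[k] (1 : H))) ∧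
     (∀ a : A, counitMap k A H (ρ a) = a)) := by
  have hfun : ∀ x, (counitMap k A H).rTensor H x = counitAlg2 k A H x := fun x =>
    (LinearMap.congr_fun (counitAlg2_eq k A H) x).symm
  have hmul : ∀ x y : (A ⊗[k] H) ⊗[k] H,
      (counitMap k A H).rTensor H (x * y) =
        (counitMap k A H).rTensor H x * (counitMap k A H).rTensor H y := by
    intro x y
    rw [hfun, hfun, hfun, map_mul]
  constructor
  · rintro ⟨h1, h2, h3, _, h5⟩
    exact ⟨h1, h2, fun a => by rw [h3, h5, one_mul]⟩
  · rintro ⟨h1, h2, h3⟩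
    have h5 : counitMap k A H (ρ 1) = 1 := h3 1
    refine ⟨h1, h2, fun a => by rw [h3, h5, one_mul], ?_, h5⟩
    rw [h2 1, hmul]
    have hc : (counitMap k A H).rTensor H (coassocMap k A H (ρ 1)) = ρ 1 := by
      simpa using LinearMap.congr_fun (key k A H) (ρ 1)
    have hd : (counitMap k A H).rTensor H ((ρ 1) ⊗ₜ[k] (1 : H)) = 1 := by
      rw [LinearMap.rTensor_tmul, h5, Algebra.TensorProduct.one_def]
    rw [hc, hd, mul_one]
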